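/- (Discrete Bollobás–Thomason inequality; Theorem 3.1) Let n ≥ 1 and d ≥ 1 be integers, let S ⊆ ℤ^n be a finite set of n-dimensional grid points, and let F_1, …, F_m be subsets of {1,…,n} (repetitions allowed) such that every i ∈ {1,…,n} belongs to exactly d of the sets F_1,…,F_m. For each j, let S_{F_j} denote the image of S under the projection ℤ^n → ℤ^{F_j} onto the coordinates in F_j. Then |S|^d ≤ ∏_{j=1}^m |S_{F_j}|. -/

import Mathlib

open Finset NNReal


lemma geom_holder {ι τ : Type*} (J : Finset ι) (T : Finset τ) (d : ℕ) (hd : 1 ≤ d)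
    (hJ : J.card = d) (a : ι → τ → ℝ≥0) :
    ∑ c ∈ T, ∏ j ∈ J, (a j c) ^ ((d : ℝ)⁻¹)
      ≤ ∏ j ∈ J, (∑ c ∈ T, a j c) ^ ((d : ℝ)⁻¹) := by
  have hd0 : (d : ℝ≥0) ≠ 0 := by exact_mod_cast Nat.one_le_iff_ne_zero.mp hd
  by_cases hA : ∀ j ∈ J, (∑ c ∈ T, a j c) ≠ 0
  · set A : ι → ℝ≥0 := fun j => ∑ c ∈ T, a j c with hAdef
    have key : ∀ c ∈ T, ∏ j ∈ J, (a j c) ^ ((d : ℝ)⁻¹)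
        = (∏ j ∈ J, (a j c / A j) ^ ((d : ℝ)⁻¹)) * ∏ j ∈ J, (A j) ^ ((d : ℝ)⁻¹) := by
      intro c _
      rw [← Finset.prod_mul_distrib]
      refine Finset.prod_congr rfl fun j hj => ?_
      rw [← NNReal.mul_rpow, div_mul_cancel₀ _ (hA j hj)]
    rw [Finset.sum_congr rfl key, ← Finset.sum_mul]
    have hsum : ∑ c ∈ T, ∏ j ∈ J, (a j c / A j) ^ ((d : ℝ)⁻¹) ≤ 1 := by
      have step : ∀ c ∈ T, ∏ j ∈ J, (a j c / A j) ^ ((d : ℝ)⁻¹)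
          ≤ ∑ j ∈ J, (d : ℝ≥0)⁻¹ * (a j c / A j) := by
        intro c _
        have := NNReal.geom_mean_le_arith_mean_weighted J (fun _ => (d : ℝ≥0)⁻¹)
          (fun j => a j c / A j) (by
            rw [Finset.sum_const, hJ, nsmul_eq_mul, mul_inv_cancel₀ hd0])
        simpa using this
      calc ∑ c ∈ T, ∏ j ∈ J, (a j c / A j) ^ ((d : ℝ)⁻¹)
          ≤ ∑ c ∈ T, ∑ j ∈ J, (d : ℝ≥0)⁻¹ * (a j c / A j) := Finset.sum_le_sum step
        _ = ∑ j ∈ J, (d : ℝ≥0)⁻¹ * ((∑ c ∈ T, a j c) / A j) := by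
            rw [Finset.sum_comm]
            refine Finset.sum_congr rfl fun j _ => ?_
            rw [← Finset.mul_sum, Finset.sum_div]
        _ = ∑ j ∈ J, (d : ℝ≥0)⁻¹ := by
            refine Finset.sum_congr rfl fun j hj => ?_
            rw [div_self (hA j hj), mul_one]
        _ = 1 := by rw [Finset.sum_const, hJ, nsmul_eq_mul, mul_inv_cancel₀ hd0]
    calc (∑ c ∈ T, ∏ j ∈ J, (a j c / A j) ^ ((d : ℝ)⁻¹)) * ∏ j ∈ J, (A j) ^ ((d : ℝ)⁻¹)
        ≤ 1 * ∏ j ∈ J, (A j) ^ ((d : ℝ)⁻¹) := by gcongr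
      _ = _ := one_mul _
  · push_neg at hA
    obtain ⟨j0, hj0, hA0⟩ := hA
    have hz : ∀ c ∈ T, a j0 c = 0 := by
      intro c hc
      exact (Finset.sum_eq_zero_iff.mp hA0) c hc
    have : ∀ c ∈ T, ∏ j ∈ J, (a j c) ^ ((d : ℝ)⁻¹) = 0 := by
      intro c hc
      apply Finset.prod_eq_zero hj0
      rw [hz c hc, NNReal.zero_rpow (by positivity)]
    rw [Finset.sum_eq_zero this]
    positivity

lemma holder_nat {ι τ : Type*} (J : Finset ι) (T : Finset τ) (d : ℕ) (hd : 1 ≤ d)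
    (hJ : J.card = d) (x : τ → ℕ) (a : ι → τ → ℕ) (B : ℕ)
    (h : ∀ c ∈ T, x c ^ d ≤ B * ∏ j ∈ J, a j c) :
    (∑ c ∈ T, x c) ^ d ≤ B * ∏ j ∈ J, (∑ c ∈ T, a j c) := by
  have hdR : (d : ℝ) ≠ 0 := by exact_mod_cast Nat.one_le_iff_ne_zero.mp hd
  -- work in ℝ≥0
  set a' : ι → τ → ℝ≥0 := fun j c => (a j c : ℝ≥0) with ha'
  have key : ∀ y z : ℝ≥0, y ^ d ≤ z → y ≤ z ^ ((d : ℝ)⁻¹) := by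
    intro y z hyz
    have : (y ^ d : ℝ≥0) ^ ((d : ℝ)⁻¹) ≤ z ^ ((d : ℝ)⁻¹) :=
      NNReal.rpow_le_rpow hyz (by positivity)
    rwa [← NNReal.rpow_natCast y d, ← NNReal.rpow_mul,
      mul_inv_cancel₀ hdR, NNReal.rpow_one] at this
  have step1 : ∀ c ∈ T, (x c : ℝ≥0)
      ≤ (B : ℝ≥0) ^ ((d : ℝ)⁻¹) * ∏ j ∈ J, (a' j c) ^ ((d : ℝ)⁻¹) := by
    intro c hc
    have := key (x c) ((B : ℝ≥0) * ∏ j ∈ J, a' j c) (by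
      simp only [ha']
      exact_mod_cast h c hc)
    rwa [NNReal.mul_rpow, ← NNReal.finset_prod_rpow] at this
  have step2 : (∑ c ∈ T, (x c : ℝ≥0))
      ≤ (B : ℝ≥0) ^ ((d : ℝ)⁻¹) * ∏ j ∈ J, (∑ c ∈ T, a' j c) ^ ((d : ℝ)⁻¹) := by
    calc ∑ c ∈ T, (x c : ℝ≥0)
        ≤ ∑ c ∈ T, (B : ℝ≥0) ^ ((d : ℝ)⁻¹) * ∏ j ∈ J, (a' j c) ^ ((d : ℝ)⁻¹) :=
          Finset.sum_le_sum step1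
      _ = (B : ℝ≥0) ^ ((d : ℝ)⁻¹) * ∑ c ∈ T, ∏ j ∈ J, (a' j c) ^ ((d : ℝ)⁻¹) := by
          rw [Finset.mul_sum]
      _ ≤ _ := by gcongr; exact geom_holder J T d hd hJ a'
  have step3 : (∑ c ∈ T, (x c : ℝ≥0)) ^ d
      ≤ (B : ℝ≥0) * ∏ j ∈ J, (∑ c ∈ T, a' j c) := by
    calc (∑ c ∈ T, (x c : ℝ≥0)) ^ d
        ≤ ((B : ℝ≥0) ^ ((d : ℝ)⁻¹) * ∏ j ∈ J, (∑ c ∈ T, a' j c) ^ ((d : ℝ)⁻¹)) ^ d :=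
          pow_le_pow_left₀ (zero_le) step2 d
      _ = _ := by
          rw [mul_pow, ← NNReal.rpow_natCast ((B:ℝ≥0) ^ ((d:ℝ)⁻¹)) d,
            ← NNReal.rpow_mul, inv_mul_cancel₀ hdR, NNReal.rpow_one,
            ← Finset.prod_pow]
          congr 1
          refine Finset.prod_congr rfl fun j _ => ?_
          rw [← NNReal.rpow_natCast ((∑ c ∈ T, a' j c) ^ ((d:ℝ)⁻¹)) d,
            ← NNReal.rpow_mul, inv_mul_cancel₀ hdR, NNReal.rpow_one]
  simp only [ha'] at step3
  exact_mod_cast step3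

variable {ι : Type*} [DecidableEq ι]

def proj (G : Finset ι) (S : Finset (ι → ℤ)) : Finset ({i // i ∈ G} → ℤ) :=
  S.image (fun t => fun v : {i // i ∈ G} => t v)

omit [DecidableEq ι] in
lemma mem_proj {G : Finset ι} {S : Finset (ι → ℤ)} {f : {i // i ∈ G} → ℤ} :
    f ∈ proj G S ↔ ∃ t ∈ S, (fun v : {i // i ∈ G} => t v) = f :=
  Finset.mem_image

omit [DecidableEq ι] in
lemma proj_mono (G : Finset ι) {S S' : Finset (ι → ℤ)} (h : S ⊆ S') :
    proj G S ⊆ proj G S' :=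
  Finset.image_subset_image h

lemma slice_card (G : Finset ι) (i0 : ι) (hi0 : i0 ∈ G) (S : Finset (ι → ℤ)) :
    (proj G S).card
      = ∑ c ∈ S.image (fun t => t i0),
          (proj (G.erase i0) (S.filter (fun t => t i0 = c))).card := by
  classical
  rw [Finset.card_eq_sum_card_fiberwise
    (f := fun f : {i // i ∈ G} → ℤ => f ⟨i0, hi0⟩) (t := S.image (fun t => t i0)) ?_]
  · refine Finset.sum_congr rfl fun c hc => ?_
    -- fiber = proj G (slice), and its card equals proj of erase
    have hfib : (proj G S).filter (fun f => f ⟨i0, hi0⟩ = c)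
        = proj G (S.filter (fun t => t i0 = c)) := by
      ext f
      simp only [Finset.mem_filter, mem_proj, Finset.mem_filter]
      constructor
      · rintro ⟨⟨t, ht, rfl⟩, hfc⟩
        exact ⟨t, ⟨ht, hfc⟩, rfl⟩
      · rintro ⟨t, ⟨ht, htc⟩, rfl⟩
        exact ⟨⟨t, ht, rfl⟩, htc⟩
    rw [hfib]
    -- card equality via injective restriction
    have : proj (G.erase i0) (S.filter (fun t => t i0 = c))
        = (proj G (S.filter (fun t => t i0 = c))).image
            (fun f => fun v : {i // i ∈ G.erase i0} => f ⟨v, Finset.mem_of_mem_erase v.2⟩) := by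
      simp only [proj, Finset.image_image]
      rfl
    rw [this]
    refine (Finset.card_image_of_injOn ?_).symm
    rintro f hf g hg hfg
    rw [Finset.mem_coe] at hf hg
    obtain ⟨t, htm, rfl⟩ := mem_proj.mp hf
    obtain ⟨u, hum, rfl⟩ := mem_proj.mp hg
    obtain ⟨ht, htc⟩ := Finset.mem_filter.mp htm
    obtain ⟨hu, huc⟩ := Finset.mem_filter.mp hum
    funext v
    rcases eq_or_ne (v : ι) i0 with hv | hv
    · simp only [Subtype.ext_iff] at *
      show t v = u v
      rw [hv, htc, huc]
    · have hv' : (v : ι) ∈ G.erase i0 := Finset.mem_erase.mpr ⟨hv, v.2⟩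
      exact congrFun hfg ⟨v, hv'⟩
  · intro f hf
    obtain ⟨t, ht, rfl⟩ := mem_proj.mp hf
    exact Finset.mem_image.mpr ⟨t, ht, rfl⟩

lemma bt_key {m d : ℕ} (hd : 1 ≤ d) (E : Finset ι) :
    ∀ (F : Fin m → Finset ι), (∀ j, F j ⊆ E) →
      (∀ i ∈ E, (Finset.univ.filter (fun j : Fin m => i ∈ F j)).card = d) →
      ∀ S : Finset (ι → ℤ),
        (proj E S).card ^ d ≤ ∏ j : Fin m, (proj (F j) S).card := by
  induction E using Finset.strongInduction with
  | _ E ih =>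
    intro F hFE hF S
    rcases E.eq_empty_or_nonempty with rfl | ⟨i0, hi0⟩
    · -- base case : E = ∅
      rcases S.eq_empty_or_nonempty with rfl | hS
      · simp [proj, zero_pow (Nat.one_le_iff_ne_zero.mp hd)]
      · have h1 : (proj (∅ : Finset ι) S).card ≤ 1 := by
          haveI : IsEmpty {i // i ∈ (∅ : Finset ι)} :=
            ⟨fun v => (Finset.notMem_empty _ v.2)⟩
          exact Finset.card_le_one.mpr fun a _ b _ => Subsingleton.elim a b
        calc (proj (∅ : Finset ι) S).card ^ d ≤ 1 ^ d := Nat.pow_le_pow_left h1 d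
          _ = 1 := one_pow d
          _ ≤ ∏ j : Fin m, (proj (F j) S).card := by
              refine Finset.one_le_prod' fun j _ => ?_
              exact Finset.card_pos.mpr ((hS.image _))
    · -- inductive step
      set E' := E.erase i0 with hE'
      set F' : Fin m → Finset ι := fun j => (F j).erase i0 with hF'
      set T := S.image (fun t => t i0) with hT
      set Sc : ℤ → Finset (ι → ℤ) := fun c => S.filter (fun t => t i0 = c) with hSc
      set J := Finset.univ.filter (fun j : Fin m => i0 ∈ F j) with hJdef
      have hJ : J.card = d := hF i0 hi0
      set B := ∏ j ∈ Finset.univ.filter (fun j : Fin m => ¬ i0 ∈ F j),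
        (proj (F j) S).card with hB
      have hmain : ∀ c ∈ T,
          (proj E' (Sc c)).card ^ d ≤ B * ∏ j ∈ J, (proj (F' j) (Sc c)).card := by
        intro c _
        have hIH := ih E' (Finset.erase_ssubset hi0) F'
          (fun j => Finset.erase_subset_erase i0 (hFE j))
          (fun i hi => by
            have heq : (Finset.univ.filter (fun j : Fin m => i ∈ F' j))
                = Finset.univ.filter (fun j : Fin m => i ∈ F j) :=
              Finset.filter_congr fun j _ => by
                simp [hF', Finset.mem_erase, (Finset.mem_erase.mp hi).1]
            rw [heq]
            exact hF i (Finset.mem_of_mem_erase hi))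
          (Sc c)
        refine hIH.trans ?_
        rw [← Finset.prod_filter_mul_prod_filter_not Finset.univ
          (fun j : Fin m => i0 ∈ F j) (fun j => (proj (F' j) (Sc c)).card), mul_comm]
        refine Nat.mul_le_mul ?_ le_rfl
        refine Finset.prod_le_prod' fun j hj => ?_
        have heq : F' j = F j := Finset.erase_eq_of_notMem (Finset.mem_filter.mp hj).2
        rw [heq]
        exact Finset.card_le_card (proj_mono _ (Finset.filter_subset _ _))
      have hholder := holder_nat J T d hd hJ
        (fun c => (proj E' (Sc c)).card)
        (fun j c => (proj (F' j) (Sc c)).card) B hmain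
      calc (proj E S).card ^ d
          = (∑ c ∈ T, (proj E' (Sc c)).card) ^ d := by
            rw [slice_card E i0 hi0 S]
        _ ≤ B * ∏ j ∈ J, ∑ c ∈ T, (proj (F' j) (Sc c)).card := hholder
        _ = B * ∏ j ∈ J, (proj (F j) S).card := by
            congr 1
            refine Finset.prod_congr rfl fun j hj => ?_
            rw [slice_card (F j) i0 (Finset.mem_filter.mp hj).2 S]
        _ = ∏ j : Fin m, (proj (F j) S).card := by
            rw [mul_comm]
            exact Finset.prod_filter_mul_prod_filter_not Finset.univ _ _


/-- **Discrete Bollobás–Thomason inequality** (Theorem 3.1).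
`S` is a finite set of points of `ℤ^n`, and `F 0, …, F (m-1)` are subsets of the
coordinates (repetitions allowed) such that every coordinate `i` belongs to
exactly `d` of them.  Then `|S|^d ≤ ∏ j, |S_{F j}|`, where `S_{F j}` is the
projection of `S` onto the coordinates in `F j`. -/
theorem discrete_bollobas_thomason
    {n m d : ℕ} (hn : 1 ≤ n) (hd : 1 ≤ d)
    (S : Finset (Fin n → ℤ)) (F : Fin m → Finset (Fin n))
    (hF : ∀ i : Fin n, (Finset.univ.filter (fun j : Fin m => i ∈ F j)).card = d) :
    S.card ^ d
      ≤ ∏ j : Fin m, (S.image (fun t => fun v : {i // i ∈ F j} => t v)).card := by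
  have key := bt_key hd (Finset.univ : Finset (Fin n)) F
    (fun j => Finset.subset_univ _) (fun i _ => hF i) S
  have hinj : Function.Injective
      (fun t : Fin n → ℤ => fun v : {i // i ∈ (Finset.univ : Finset (Fin n))} => t v) :=
    fun t u h => funext fun i => congrFun h ⟨i, Finset.mem_univ i⟩
  have hcard : (proj (Finset.univ : Finset (Fin n)) S).card = S.card :=
    Finset.card_image_of_injective S hinj
  rw [hcard] at key
  exact key
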